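/- The componentwise maximum of two n-tuples (with entries in {0,...,n-1} ∪ {∞}) each satisfying condition (ii) also satisfies condition (ii). -/

import Mathlib

/-- Condition (i) for type `B_n` bracket vectors: for `i < j` (0-based),
if `r_j - (j-i)` is a nonnegative integer then `r_i ≤ r_j - (j-i)`
(equivalently `r_i + (j-i) ≤ r_j`; when `r_j = ∞` this holds trivially,
matching the convention that `∞` minus an integer is `∞`). -/
def condIB (n : ℕ) (r : Fin n → ℕ∞) : Prop :=
  ∀ i j : Fin n, i < j → (((j : ℕ) - (i : ℕ) : ℕ) : ℕ∞) ≤ r j →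
    r i + (((j : ℕ) - (i : ℕ) : ℕ) : ℕ∞) ≤ r j

/-- Condition (ii) for type `B_n` bracket vectors: if `∞ > r_i ≥ i`
(1-based; here `i = k+1` for the 0-based index `k`) then `r_{n+i-r_i} = ∞`. -/
def condIIB (n : ℕ) (r : Fin n → ℕ∞) : Prop :=
  ∀ (k : Fin n) (t : ℕ), r k = (t : ℕ∞) → ∀ _ht : (k : ℕ) + 1 ≤ t,
    r ⟨n + (k : ℕ) - t, by have := k.isLt; omega⟩ = ⊤

/-- Entries lie in `{0, …, n-1} ∪ {∞}`. -/
def entriesB (n : ℕ) (r : Fin n → ℕ∞) : Prop :=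
  ∀ k, r k = ⊤ ∨ r k ≤ ((n - 1 : ℕ) : ℕ∞)

/-- A type `B_n` bracket vector. -/
def isBVec (n : ℕ) (r : Fin n → ℕ∞) : Prop :=
  entriesB n r ∧ condIB n r ∧ condIIB n r

/-- The componentwise maximum of two `n`-tuples with entries in
`{0,…,n-1} ∪ {∞}` each satisfying condition (ii) also satisfies
condition (ii). -/
theorem max_satisfies_condII (n : ℕ) (r s : Fin n → ℕ∞)
    (hr : entriesB n r) (hs : entriesB n s)
    (hr2 : condIIB n r) (hs2 : condIIB n s) :
    condIIB n (fun k => max (r k) (s k)) := by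
  intro k t hmax ht
  beta_reduce at hmax
  have h : r k = (t : ℕ∞) ∨ s k = (t : ℕ∞) := by
    rcases max_cases (r k) (s k) with ⟨h1, _⟩ | ⟨h1, _⟩
    · exact Or.inl (h1 ▸ hmax)
    · exact Or.inr (h1 ▸ hmax)
  rcases h with h | h
  · have := hr2 k t h ht
    simp [this]
  · have := hs2 k t h ht
    simp [this]
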